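/- Let F be real closed and D = diag(d_1,...,d_n) with all d_i > 0. Then the F-tubes Y_{0,l_∞} and Y_{−Id, D} in the Siegel upper half-space intersect in exactly one point, namely iY where Y is the unique positive square root of D. -/

import Mathlib

open Matrix Polynomial

/-- A real closed field. -/
def IsRealClosedFld (F : Type*) [Field F] [LinearOrder F] [IsStrictOrderedRing F] : Prop :=
  (∀ x : F, 0 ≤ x → ∃ y, y ^ 2 = x) ∧
    ∀ p : Polynomial F, Odd p.natDegree → ∃ x, p.IsRoot x

/-- A symmetric positive definite matrix over an ordered field. -/
def IsPosDefM {F : Type*} [Field F] [LinearOrder F] [IsStrictOrderedRing F] {n : ℕ}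
    (Y : Matrix (Fin n) (Fin n) F) : Prop :=
  Yᵀ = Y ∧ ∀ v : Fin n → F, v ≠ 0 → 0 < v ⬝ᵥ Y.mulVec v

/-- The quadratic extension `K = F[i]`. -/
abbrev Kc (F : Type*) [CommRing F] : Type _ :=
  AdjoinRoot (Polynomial.X ^ 2 + 1 : Polynomial F)

/-- The point `Z = X + iY`, as a matrix over `K = F[i]`. -/
noncomputable def siegelPt {F : Type*} [CommRing F] {n : ℕ}
    (X Y : Matrix (Fin n) (Fin n) F) : Matrix (Fin n) (Fin n) (Kc F) :=
  X.map (algebraMap F (Kc F)) +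
    (AdjoinRoot.root (Polynomial.X ^ 2 + 1 : Polynomial F)) • Y.map (algebraMap F (Kc F))

/-- The complex conjugate `σ(Z) = X − iY`. -/
noncomputable def siegelConj {F : Type*} [CommRing F] {n : ℕ}
    (X Y : Matrix (Fin n) (Fin n) F) : Matrix (Fin n) (Fin n) (Kc F) :=
  X.map (algebraMap F (Kc F)) -
    (AdjoinRoot.root (Polynomial.X ^ 2 + 1 : Polynomial F)) • Y.map (algebraMap F (Kc F))

/-- The matrix crossratio `R(l1,l2,l3,l4) = (a−b)⁻¹ (d−b) (d−c)⁻¹ (a−c)` in an affine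
chart. -/
noncomputable def crm {L : Type*} [CommRing L] {n : ℕ}
    (a b c d : Matrix (Fin n) (Fin n) L) : Matrix (Fin n) (Fin n) L :=
  (a - b)⁻¹ * (d - b) * (d - c)⁻¹ * (a - c)

/-- Membership of the Siegel point `Z = X + iY` in both tubes `Y_{0,l_∞}` (given by
`Z⁻¹ σ(Z) = −Id`) and `Y_{−Id,D}` (given by `R(−Id, Z, σ(Z), D) = −Id`). -/
noncomputable def InBothTubes {F : Type*} [Field F] [LinearOrder F] [IsStrictOrderedRing F] {n : ℕ}
    (D X Y : Matrix (Fin n) (Fin n) F) : Prop :=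
  Xᵀ = X ∧ IsPosDefM Y ∧
    (siegelPt X Y)⁻¹ * siegelConj X Y = -1 ∧
    crm (-1) (siegelPt X Y) (siegelConj X Y) (D.map (algebraMap F (Kc F))) = -1

set_option maxRecDepth 4000

section Aux
variable {F : Type*} [Field F] [LinearOrder F] [IsStrictOrderedRing F]

lemma noRoot_Xsq (x : F) : ¬ IsRoot (X ^ 2 + 1 : F[X]) x := by
  simp only [IsRoot, eval_add, eval_pow, eval_X, eval_one]
  nlinarith [sq_nonneg x]

lemma Xsq_ne_zero : (X ^ 2 + 1 : F[X]) ≠ 0 := by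
  intro h
  have := congrArg (fun p => Polynomial.coeff p 0) h
  simp at this

lemma natDeg_Xsq : (X ^ 2 + 1 : F[X]).natDegree = 2 := by
  simpa using Polynomial.natDegree_X_pow_add_C (R := F) (n := 2) (r := 1)

lemma deg_Xsq : (X ^ 2 + 1 : F[X]).degree = 2 := by
  simpa using Polynomial.degree_X_pow_add_C (by norm_num : 0 < 2) (1 : F)

lemma irr_Xsq : Irreducible (X ^ 2 + 1 : F[X]) := by
  rw [Polynomial.irreducible_iff_roots_eq_zero_of_degree_le_three
    (by rw [natDeg_Xsq]) (by rw [natDeg_Xsq]; norm_num)]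
  rw [Multiset.eq_zero_iff_forall_notMem]
  intro x hx
  exact noRoot_Xsq x ((Polynomial.mem_roots Xsq_ne_zero).1 hx)

noncomputable def jj (F : Type*) [CommRing F] : Kc F :=
  AdjoinRoot.root (Polynomial.X ^ 2 + 1 : Polynomial F)

noncomputable def phi (F : Type*) [CommRing F] : F →+* Kc F := algebraMap F (Kc F)

noncomputable instance KcField : Field (Kc F) := by
  haveI : Fact (Irreducible (X ^ 2 + 1 : F[X])) := ⟨irr_Xsq⟩
  infer_instance

lemma jj_sq : (jj F) ^ 2 = -1 := by
  have h : AdjoinRoot.mk (X ^ 2 + 1 : F[X]) (X ^ 2 + 1) = 0 := AdjoinRoot.mk_self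
  rw [map_add, map_pow, AdjoinRoot.mk_X, _root_.map_one] at h
  have := eq_neg_of_add_eq_zero_left h
  simpa [jj] using this

lemma phi_mk (a : F) : phi F a = AdjoinRoot.mk (X ^ 2 + 1 : F[X]) (C a) := rfl

lemma scalar_decomp_zero {a b : F} (h : phi F a + phi F b * jj F = 0) : a = 0 ∧ b = 0 := by
  have h2 : AdjoinRoot.mk (X ^ 2 + 1 : F[X]) (C a + C b * X) = 0 := by
    rw [map_add, _root_.map_mul, AdjoinRoot.mk_X]
    rw [← phi_mk, ← phi_mk]; exact h
  rw [AdjoinRoot.mk_eq_zero] at h2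
  have h0 : (C a + C b * X : F[X]) = 0 := by
    refine Polynomial.eq_zero_of_dvd_of_degree_lt h2 ?_
    rw [deg_Xsq]
    calc (C a + C b * X : F[X]).degree ≤ 1 := by
            simpa [add_comm] using Polynomial.degree_linear_le (a := b) (b := a)
      _ < 2 := by norm_num
  constructor
  · have := congrArg (fun p => Polynomial.coeff p 0) h0; simpa using this
  · have := congrArg (fun p => Polynomial.coeff p 1) h0; simpa using this

lemma scalar_surj (z : Kc F) : ∃ a b : F, z = phi F a + phi F b * jj F := by
  obtain ⟨g, rfl⟩ := AdjoinRoot.mk_surjective z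
  have hm : (X ^ 2 + 1 : F[X]).Monic := by
    have := Polynomial.monic_X_pow_add_C (R := F) (1:F) (n := 2) (by norm_num)
    simpa using this
  set r := g %ₘ (X ^ 2 + 1 : F[X]) with hr
  have hmk : AdjoinRoot.mk (X ^ 2 + 1 : F[X]) g = AdjoinRoot.mk _ r := by
    conv_lhs => rw [← Polynomial.modByMonic_add_div g (X ^ 2 + 1 : F[X])]
    rw [map_add, _root_.map_mul, AdjoinRoot.mk_self, zero_mul, add_zero]
  have hdeg : r.degree ≤ 1 := by
    have := Polynomial.degree_modByMonic_lt g hm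
    rw [deg_Xsq] at this
    exact Order.le_of_lt_succ (by exact_mod_cast this)
  refine ⟨r.coeff 0, r.coeff 1, ?_⟩
  rw [hmk]
  conv_lhs => rw [Polynomial.eq_X_add_C_of_degree_le_one hdeg]
  rw [map_add, _root_.map_mul, AdjoinRoot.mk_X, ← phi_mk, ← phi_mk]
  rw [add_comm]
  rfl

end Aux

section MatrixAux
variable {F : Type*} [Field F] [LinearOrder F] [IsStrictOrderedRing F] {n : ℕ}

/-- entrywise map as a ring hom -/
noncomputable def mmap (F : Type*) [Field F] [LinearOrder F] [IsStrictOrderedRing F] (n : ℕ) :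
    Matrix (Fin n) (Fin n) F →+* Matrix (Fin n) (Fin n) (Kc F) :=
  (phi F).mapMatrix

lemma mmap_apply (A : Matrix (Fin n) (Fin n) F) :
    mmap F n A = A.map (algebraMap F (Kc F)) := rfl

lemma phi_inj : Function.Injective (phi F) := (phi F).injective

lemma mmap_inj : Function.Injective (mmap F n) := by
  intro A B h
  ext i j
  exact phi_inj (congrFun (congrFun h i) j)

lemma matrix_decomp_zero {A B : Matrix (Fin n) (Fin n) F}
    (h : mmap F n A + jj F • mmap F n B = 0) : A = 0 ∧ B = 0 := by
  have key : ∀ i j : Fin n, A i j = 0 ∧ B i j = 0 := by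
    intro i j
    have hij := congrFun (congrFun (congrArg (fun M : Matrix (Fin n) (Fin n) (Kc F) => (M : Matrix _ _ _)) h) i) j
    have : phi F (A i j) + phi F (B i j) * jj F = 0 := by
      simpa [mmap, RingHom.mapMatrix_apply, Matrix.map_apply, Matrix.add_apply,
        Matrix.smul_apply, smul_eq_mul, mul_comm] using hij
    exact scalar_decomp_zero this
  constructor <;> ext i j <;> simp [(key i j).1, (key i j).2]

lemma matrix_decomp_eq {A B A' B' : Matrix (Fin n) (Fin n) F}
    (h : mmap F n A + jj F • mmap F n B = mmap F n A' + jj F • mmap F n B') :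
    A = A' ∧ B = B' := by
  have h0 : mmap F n (A - A') + jj F • mmap F n (B - B') = 0 := by
    rw [map_sub, map_sub, smul_sub]
    rw [sub_add_sub_comm, h, sub_self]
  obtain ⟨h1, h2⟩ := matrix_decomp_zero h0
  exact ⟨sub_eq_zero.1 h1, sub_eq_zero.1 h2⟩

lemma mulVec_mmap (A : Matrix (Fin n) (Fin n) F) (x : Fin n → F) :
    (mmap F n A).mulVec (fun i => phi F (x i)) = fun i => phi F (A.mulVec x i) := by
  funext i
  simp [mmap, RingHom.mapMatrix_apply, Matrix.mulVec, dotProduct,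
    Matrix.map_apply, map_sum]

/-- key invertibility: `A + i B` is invertible over `K` for `A` positive definite and
`B` symmetric. -/
lemma isUnit_det_add_smul {A B : Matrix (Fin n) (Fin n) F}
    (hA : ∀ v : Fin n → F, v ≠ 0 → 0 < v ⬝ᵥ A.mulVec v) (hB : Bᵀ = B) :
    IsUnit (mmap F n A + jj F • mmap F n B).det := by
  rw [isUnit_iff_ne_zero]
  intro hdet
  obtain ⟨v, hv, hker⟩ := (Matrix.exists_mulVec_eq_zero_iff).2 hdet
  choose x y hxy using fun i => scalar_surj (F := F) (v i)
  have hvdec : v = (fun i => phi F (x i)) + jj F • fun i => phi F (y i) := by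
    funext i
    simp only [Pi.add_apply, Pi.smul_apply, smul_eq_mul]
    rw [hxy i]; ring
  -- expand the kernel equation
  have hexp : (fun i => phi F ((A.mulVec x - B.mulVec y) i)) +
      jj F • (fun i => phi F ((A.mulVec y + B.mulVec x) i)) = 0 := by
    have e1 : (mmap F n A + jj F • mmap F n B).mulVec v = 0 := hker
    rw [hvdec] at e1
    rw [Matrix.mulVec_add, Matrix.add_mulVec, Matrix.add_mulVec,
      Matrix.smul_mulVec, Matrix.smul_mulVec,
      Matrix.mulVec_smul, Matrix.mulVec_smul] at e1
    rw [mulVec_mmap, mulVec_mmap, mulVec_mmap, mulVec_mmap] at e1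
    have hjj : ∀ w : Fin n → Kc F, jj F • jj F • w = -w := by
      intro w
      rw [smul_smul, ← sq, jj_sq, neg_smul, one_smul]
    rw [hjj] at e1
    funext i
    have := congrFun e1 i
    simp only [Pi.add_apply, Pi.smul_apply, Pi.neg_apply, Pi.zero_apply, smul_eq_mul] at this ⊢
    simp only [Pi.sub_apply, Pi.add_apply, map_sub, map_add]
    linear_combination this
  -- separate real and imaginary parts
  have hsep : ∀ i, (A.mulVec x - B.mulVec y) i = 0 ∧ (A.mulVec y + B.mulVec x) i = 0 := by
    intro i
    have := congrFun hexp i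
    simp only [Pi.add_apply, Pi.smul_apply, Pi.zero_apply, smul_eq_mul] at this
    exact scalar_decomp_zero (by linear_combination this)
  have h1 : A.mulVec x = B.mulVec y := by
    funext i; have := (hsep i).1; simpa [sub_eq_zero] using this
  have h2 : A.mulVec y = -(B.mulVec x) := by
    funext i; have := (hsep i).2; simp only [Pi.add_apply] at this
    simp only [Pi.neg_apply]; linarith
  -- x = y = 0
  have hBsym : ∀ u w : Fin n → F, u ⬝ᵥ B.mulVec w = w ⬝ᵥ B.mulVec u := by
    intro u w
    rw [dotProduct_mulVec, ← Matrix.mulVec_transpose, hB, dotProduct_comm]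
  have hnonneg : ∀ u : Fin n → F, 0 ≤ u ⬝ᵥ A.mulVec u := by
    intro u
    by_cases hu : u = 0
    · simp [hu]
    · exact le_of_lt (hA u hu)
  have hsum : x ⬝ᵥ A.mulVec x + y ⬝ᵥ A.mulVec y = 0 := by
    rw [h1, h2]
    rw [dotProduct_neg]
    rw [hBsym x y]
    ring
  have hx0 : x = 0 := by
    by_contra hx
    have := hA x hx
    have := hnonneg y
    linarith
  have hy0 : y = 0 := by
    by_contra hy
    have := hA y hy
    have := hnonneg x
    linarith
  apply hv
  rw [hvdec, hx0, hy0]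
  funext i; simp

end MatrixAux

section PosDefAux
variable {F : Type*} [Field F] [LinearOrder F] [IsStrictOrderedRing F] {n : ℕ}

lemma posdef_one : ∀ v : Fin n → F, v ≠ 0 → 0 < v ⬝ᵥ (1 : Matrix (Fin n) (Fin n) F) *ᵥ v := by
  intro v hv
  rw [Matrix.one_mulVec]
  obtain ⟨i, hi⟩ := Function.ne_iff.1 hv
  have hi' : v i ≠ 0 := by simpa using hi
  refine Finset.sum_pos' (fun j _ => mul_self_nonneg _) ⟨i, Finset.mem_univ i, ?_⟩
  exact mul_self_pos.2 hi'

lemma posdef_diagonal {d : Fin n → F} (hd : ∀ i, 0 < d i) :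
    ∀ v : Fin n → F, v ≠ 0 → 0 < v ⬝ᵥ (Matrix.diagonal d) *ᵥ v := by
  intro v hv
  obtain ⟨i, hi⟩ := Function.ne_iff.1 hv
  have hi' : v i ≠ 0 := by simpa using hi
  unfold dotProduct
  refine Finset.sum_pos' (fun j _ => ?_) ⟨i, Finset.mem_univ i, ?_⟩
  · rw [Matrix.mulVec_diagonal]
    nlinarith [mul_self_nonneg (v j), (hd j).le]
  · rw [Matrix.mulVec_diagonal]
    have h2 : 0 < v i * v i := mul_self_pos.2 hi'
    nlinarith [hd i]

lemma posdef_neg_symm {Y : Matrix (Fin n) (Fin n) F} (hY : IsPosDefM Y) : (-Y)ᵀ = -Y := by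
  rw [Matrix.transpose_neg, hY.1]

lemma posdef_det_ne_zero {Y : Matrix (Fin n) (Fin n) F} (hY : IsPosDefM Y) : Y.det ≠ 0 := by
  intro h
  obtain ⟨v, hv, hker⟩ := (Matrix.exists_mulVec_eq_zero_iff).2 h
  have h2 := hY.2 v hv
  rw [hker] at h2
  simp at h2

lemma posdef_dot_nonneg {Y : Matrix (Fin n) (Fin n) F} (hY : IsPosDefM Y) (v : Fin n → F) :
    0 ≤ v ⬝ᵥ Y *ᵥ v := by
  by_cases hv : v = 0
  · simp [hv]
  · exact (hY.2 v hv).le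

end PosDefAux

section Units
variable {F : Type*} [Field F] [LinearOrder F] [IsStrictOrderedRing F] {n : ℕ}

lemma jj_ne_zero : (jj F : Kc F) ≠ 0 := by
  intro h
  have h2 : ((-1 : Kc F)) = 0 := by rw [← jj_sq, h]; ring
  have : (1 : Kc F) = 0 := by linear_combination -h2
  exact one_ne_zero this

lemma mmap_det (A : Matrix (Fin n) (Fin n) F) : (mmap F n A).det = phi F A.det := by
  rw [mmap, ((phi F).map_det A).symm]

lemma isUnit_det_sub_smul {A B : Matrix (Fin n) (Fin n) F}
    (hA : ∀ v : Fin n → F, v ≠ 0 → 0 < v ⬝ᵥ A.mulVec v) (hB : Bᵀ = B) :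
    IsUnit (mmap F n A - jj F • mmap F n B).det := by
  have h := isUnit_det_add_smul (F := F) hA (B := -B) (by rw [Matrix.transpose_neg, hB])
  have e : mmap F n A + jj F • mmap F n (-B) = mmap F n A - jj F • mmap F n B := by
    rw [map_neg, smul_neg]; abel
  rwa [e] at h

lemma isUnit_det_neg {M : Matrix (Fin n) (Fin n) (Kc F)} (h : IsUnit M.det) :
    IsUnit (-M).det := by
  rw [Matrix.det_neg, Fintype.card_fin]
  exact (isUnit_one.neg.pow n).mul h

section Main
variable {Y : Matrix (Fin n) (Fin n) F} {d : Fin n → F}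

lemma ZZ_eq (Y : Matrix (Fin n) (Fin n) F) :
    (jj F • mmap F n Y) * (jj F • mmap F n Y) = -(mmap F n (Y * Y)) := by
  rw [Matrix.smul_mul, Matrix.mul_smul, smul_smul, ← sq, jj_sq, _root_.map_mul (mmap F n), neg_smul, one_smul]

lemma unit_Z (hY : IsPosDefM Y) : IsUnit (jj F • mmap F n Y).det := by
  rw [Matrix.det_smul, mmap_det, Fintype.card_fin]
  refine IsUnit.mul (IsUnit.pow n ?_) ?_
  · exact isUnit_iff_ne_zero.2 jj_ne_zero
  · exact isUnit_iff_ne_zero.2 (fun h => posdef_det_ne_zero hY (phi_inj (by simpa using h)))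

lemma unit_one_add (hY : IsPosDefM Y) : IsUnit ((1 : Matrix (Fin n) (Fin n) (Kc F)) + jj F • mmap F n Y).det := by
  have h := isUnit_det_add_smul (F := F) (posdef_one (n := n)) hY.1
  rwa [_root_.map_one] at h

lemma unit_one_sub (hY : IsPosDefM Y) : IsUnit ((1 : Matrix (Fin n) (Fin n) (Kc F)) - jj F • mmap F n Y).det := by
  have h := isUnit_det_sub_smul (F := F) (posdef_one (n := n)) hY.1
  rwa [_root_.map_one] at h

lemma unit_A1 (hY : IsPosDefM Y) :
    IsUnit ((-1 : Matrix (Fin n) (Fin n) (Kc F)) - jj F • mmap F n Y).det := by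
  have h := isUnit_det_neg (unit_one_add hY)
  have e : -((1 : Matrix (Fin n) (Fin n) (Kc F)) + jj F • mmap F n Y)
      = (-1) - jj F • mmap F n Y := by abel
  rwa [e] at h

lemma unit_Q (hY : IsPosDefM Y) :
    IsUnit ((-1 : Matrix (Fin n) (Fin n) (Kc F)) + jj F • mmap F n Y).det := by
  have h := isUnit_det_neg (unit_one_sub hY)
  have e : -((1 : Matrix (Fin n) (Fin n) (Kc F)) - jj F • mmap F n Y)
      = (-1) + jj F • mmap F n Y := by abel
  rwa [e] at h

lemma unit_P (hY : IsPosDefM Y) (hd : ∀ i, 0 < d i) :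
    IsUnit (mmap F n (Matrix.diagonal d) + jj F • mmap F n Y).det :=
  isUnit_det_add_smul (posdef_diagonal hd) hY.1

lemma unit_A2 (hY : IsPosDefM Y) (hd : ∀ i, 0 < d i) :
    IsUnit (mmap F n (Matrix.diagonal d) - jj F • mmap F n Y).det :=
  isUnit_det_sub_smul (posdef_diagonal hd) hY.1

end Main
end Units

section CrmKey
variable {L : Type*} [CommRing L] {n : ℕ}

lemma mul_comm_nonsing_inv {Q W : Matrix (Fin n) (Fin n) L} (hQ : IsUnit Q.det)
    (h : Q * W = W * Q) : Q⁻¹ * W = W * Q⁻¹ := by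
  calc Q⁻¹ * W = Q⁻¹ * W * (Q * Q⁻¹) := by rw [Matrix.mul_nonsing_inv _ hQ, Matrix.mul_one]
    _ = Q⁻¹ * (W * Q) * Q⁻¹ := by noncomm_ring
    _ = Q⁻¹ * (Q * W) * Q⁻¹ := by rw [h]
    _ = (Q⁻¹ * Q) * (W * Q⁻¹) := by noncomm_ring
    _ = W * Q⁻¹ := by rw [Matrix.nonsing_inv_mul _ hQ, Matrix.one_mul]

lemma crm_key {Z Dm : Matrix (Fin n) (Fin n) L}
    (uA1 : IsUnit ((-1 : Matrix (Fin n) (Fin n) L) - Z).det)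
    (uP : IsUnit (Dm + Z).det)
    (uQ : IsUnit ((-1 : Matrix (Fin n) (Fin n) L) + Z).det) :
    ((-1 - Z)⁻¹ * (Dm - Z) * (Dm + Z)⁻¹ * (-1 + Z) = -1) ↔
      ((-1 + Z) * (Dm - Z) = (1 + Z) * (Dm + Z)) := by
  set A1 : Matrix (Fin n) (Fin n) L := -1 - Z with hA1
  set A2 : Matrix (Fin n) (Fin n) L := Dm - Z with hA2
  set P : Matrix (Fin n) (Fin n) L := Dm + Z with hP
  set Q : Matrix (Fin n) (Fin n) L := -1 + Z with hQdef
  set W : Matrix (Fin n) (Fin n) L := 1 + Z with hW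
  have hWA1 : W = -A1 := by rw [hW, hA1]; noncomm_ring
  have c0 : Q * W = W * Q := by rw [hW, hQdef]; noncomm_ring
  have hcomm : Q⁻¹ * W = W * Q⁻¹ := mul_comm_nonsing_inv uQ c0
  constructor
  · intro h
    have m1 : A1 * (A1⁻¹ * A2 * P⁻¹ * Q) = A1 * (-1) := by rw [h]
    rw [show A1 * (A1⁻¹ * A2 * P⁻¹ * Q) = (A1 * A1⁻¹) * (A2 * P⁻¹ * Q) from by noncomm_ring,
      Matrix.mul_nonsing_inv _ uA1, Matrix.one_mul, Matrix.mul_neg, Matrix.mul_one] at m1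
    have m2 : A2 * P⁻¹ * Q = W := by rw [m1, hWA1]
    have m3 : A2 * P⁻¹ = W * Q⁻¹ := by
      calc A2 * P⁻¹ = A2 * P⁻¹ * (Q * Q⁻¹) := by
            rw [Matrix.mul_nonsing_inv _ uQ, Matrix.mul_one]
        _ = (A2 * P⁻¹ * Q) * Q⁻¹ := by noncomm_ring
        _ = W * Q⁻¹ := by rw [m2]
    have m4 : A2 = W * Q⁻¹ * P := by
      calc A2 = A2 * (P⁻¹ * P) := by rw [Matrix.nonsing_inv_mul _ uP, Matrix.mul_one]
        _ = (A2 * P⁻¹) * P := by noncomm_ring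
        _ = W * Q⁻¹ * P := by rw [m3]
    calc Q * A2 = Q * (W * Q⁻¹ * P) := by rw [← m4]
      _ = (Q * W) * Q⁻¹ * P := by noncomm_ring
      _ = (W * Q) * Q⁻¹ * P := by rw [c0]
      _ = W * (Q * Q⁻¹) * P := by noncomm_ring
      _ = W * P := by rw [Matrix.mul_nonsing_inv _ uQ, Matrix.mul_one]
  · intro key
    have a2 : A2 = Q⁻¹ * (W * P) := by
      calc A2 = (Q⁻¹ * Q) * A2 := by rw [Matrix.nonsing_inv_mul _ uQ, Matrix.one_mul]
        _ = Q⁻¹ * (Q * A2) := by noncomm_ring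
        _ = Q⁻¹ * (W * P) := by rw [key]
    rw [a2]
    calc A1⁻¹ * (Q⁻¹ * (W * P)) * P⁻¹ * Q
        = A1⁻¹ * ((Q⁻¹ * W) * P) * P⁻¹ * Q := by noncomm_ring
      _ = A1⁻¹ * ((W * Q⁻¹) * P) * P⁻¹ * Q := by rw [hcomm]
      _ = (A1⁻¹ * W) * Q⁻¹ * (P * P⁻¹) * Q := by noncomm_ring
      _ = (A1⁻¹ * W) * Q⁻¹ * Q := by rw [Matrix.mul_nonsing_inv _ uP, Matrix.mul_one]
      _ = (A1⁻¹ * W) * (Q⁻¹ * Q) := by noncomm_ring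
      _ = A1⁻¹ * W := by rw [Matrix.nonsing_inv_mul _ uQ, Matrix.mul_one]
      _ = -(A1⁻¹ * A1) := by rw [hWA1, Matrix.mul_neg]
      _ = -1 := by rw [Matrix.nonsing_inv_mul _ uA1]

end CrmKey

section Core
variable {F : Type*} [Field F] [LinearOrder F] [IsStrictOrderedRing F] {n : ℕ}

lemma siegelPt_eq (X Y : Matrix (Fin n) (Fin n) F) :
    siegelPt X Y = mmap F n X + jj F • mmap F n Y := rfl

lemma siegelConj_eq (X Y : Matrix (Fin n) (Fin n) F) :
    siegelConj X Y = mmap F n X - jj F • mmap F n Y := rfl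

lemma dmap_eq (D : Matrix (Fin n) (Fin n) F) :
    D.map (algebraMap F (Kc F)) = mmap F n D := rfl

lemma key_iff {Y D : Matrix (Fin n) (Fin n) F} :
    ((-1 + jj F • mmap F n Y) * (mmap F n D - jj F • mmap F n Y) =
      (1 + jj F • mmap F n Y) * (mmap F n D + jj F • mmap F n Y)) ↔ Y * Y = D := by
  set Z := jj F • mmap F n Y with hZ
  set Dm := mmap F n D with hDm
  have exp1 : (-1 + Z) * (Dm - Z) = -Dm + Z * Dm + Z - Z * Z := by noncomm_ring
  have exp2 : (1 + Z) * (Dm + Z) = Dm + Z * Dm + Z + Z * Z := by noncomm_ring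
  have hZD : Z * Dm = jj F • mmap F n (Y * D) := by
    rw [hZ, hDm, Matrix.smul_mul, _root_.map_mul (mmap F n)]
  have lhs_eq : -Dm + Z * Dm + Z - Z * Z =
      mmap F n (Y * Y - D) + jj F • mmap F n (Y * D + Y) := by
    rw [hZ, ← hZ, ZZ_eq, hZD, map_sub, map_add, smul_add, hZ, hDm]
    abel
  have rhs_eq : Dm + Z * Dm + Z + Z * Z =
      mmap F n (D - Y * Y) + jj F • mmap F n (Y * D + Y) := by
    rw [hZ, ← hZ, ZZ_eq, hZD, map_sub, map_add, smul_add, hZ, hDm]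
    abel
  constructor
  · intro h
    rw [exp1, exp2, lhs_eq, rhs_eq] at h
    obtain ⟨h1, -⟩ := matrix_decomp_eq h
    ext i j
    have := congrFun (congrFun h1 i) j
    simp only [Matrix.sub_apply] at this
    linarith
  · intro h
    rw [exp1, exp2, lhs_eq, rhs_eq, h]

lemma forward_core (hn : 0 < n) {d : Fin n → F} (hd : ∀ i, 0 < d i)
    {X Y : Matrix (Fin n) (Fin n) F} (h : InBothTubes (Matrix.diagonal d) X Y) :
    X = 0 ∧ Y * Y = Matrix.diagonal d := by
  unfold InBothTubes at h
  obtain ⟨hXs, hY, h1, h2⟩ := h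
  rw [siegelPt_eq, siegelConj_eq] at h1 h2
  -- Z is invertible
  have huZ : IsUnit (mmap F n X + jj F • mmap F n Y).det := by
    by_contra hu
    rw [Matrix.nonsing_inv_apply_not_isUnit _ hu, Matrix.zero_mul] at h1
    have i0 : Fin n := ⟨0, hn⟩
    have h0 : (0 : Matrix (Fin n) (Fin n) (Kc F)) i0 i0
        = (-1 : Matrix (Fin n) (Fin n) (Kc F)) i0 i0 := by rw [h1]
    simp only [Matrix.zero_apply, Matrix.neg_apply, Matrix.one_apply_eq] at h0
    have h00 : (1 : Kc F) = 0 := by linear_combination h0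
    exact one_ne_zero h00
  -- conjugate is the negative
  have hconj : mmap F n X - jj F • mmap F n Y = -(mmap F n X + jj F • mmap F n Y) := by
    have m1 : (mmap F n X + jj F • mmap F n Y) *
        ((mmap F n X + jj F • mmap F n Y)⁻¹ * (mmap F n X - jj F • mmap F n Y)) =
        (mmap F n X + jj F • mmap F n Y) * (-1) := by rw [h1]
    rw [← Matrix.mul_assoc, Matrix.mul_nonsing_inv _ huZ, Matrix.one_mul,
      Matrix.mul_neg, Matrix.mul_one] at m1
    exact m1
  have hX0 : X = 0 := by
    have e : mmap F n X + jj F • mmap F n (-Y) = mmap F n (-X) + jj F • mmap F n (-Y) := by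
      rw [map_neg, map_neg, smul_neg]
      rw [sub_eq_add_neg, neg_add] at hconj
      exact hconj
    obtain ⟨hx, -⟩ := matrix_decomp_eq e
    ext i j
    have := congrFun (congrFun hx i) j
    simp only [Matrix.neg_apply, Matrix.zero_apply] at this ⊢
    linarith
  refine ⟨hX0, ?_⟩
  rw [hX0] at h2
  simp only [map_zero, zero_add, zero_sub] at h2
  unfold crm at h2
  rw [dmap_eq, sub_neg_eq_add, sub_neg_eq_add] at h2
  exact key_iff.1 ((crm_key (unit_A1 hY) (unit_P hY hd) (unit_Q hY)).1 h2)

lemma backward_core {d : Fin n → F} (hd : ∀ i, 0 < d i) {Y : Matrix (Fin n) (Fin n) F}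
    (hY : IsPosDefM Y) (hYY : Y * Y = Matrix.diagonal d) :
    InBothTubes (Matrix.diagonal d) 0 Y := by
  unfold InBothTubes
  refine ⟨Matrix.transpose_zero, hY, ?_, ?_⟩
  · rw [siegelPt_eq, siegelConj_eq]
    simp only [map_zero, zero_add, zero_sub]
    rw [Matrix.mul_neg, Matrix.nonsing_inv_mul _ (unit_Z hY)]
  · rw [siegelPt_eq, siegelConj_eq]
    simp only [map_zero, zero_add, zero_sub]
    unfold crm
    rw [dmap_eq, sub_neg_eq_add, sub_neg_eq_add]
    exact (crm_key (unit_A1 hY) (unit_P hY hd) (unit_Q hY)).2 (key_iff.2 hYY)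

end Core

section Sqrt
variable {F : Type*} [Field F] [LinearOrder F] [IsStrictOrderedRing F] {n : ℕ}

lemma sqrt_unique {Y Y' : Matrix (Fin n) (Fin n) F} (hY : IsPosDefM Y) (hY' : IsPosDefM Y')
    (h : Y * Y = Y' * Y') : Y = Y' := by
  set Δ := Y - Y' with hΔ
  have hrel : Y * Δ + Δ * Y' = 0 := by
    have e : Y * Δ + Δ * Y' = Y * Y - Y' * Y' := by rw [hΔ]; noncomm_ring
    rw [e, h, sub_self]
  have htr : Matrix.trace (Δᵀ * (Y * Δ)) + Matrix.trace (Δ * Y' * Δᵀ) = 0 := by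
    have e2 : Δᵀ * (Y * Δ) + Δᵀ * (Δ * Y') = 0 := by rw [← Matrix.mul_add, hrel, Matrix.mul_zero]
    have e3 := congrArg Matrix.trace e2
    rw [Matrix.trace_add, Matrix.trace_zero] at e3
    rw [Matrix.trace_mul_comm (Δᵀ) (Δ * Y')] at e3
    exact e3
  have ta : Matrix.trace (Δᵀ * (Y * Δ)) =
      ∑ j, (fun i => Δ i j) ⬝ᵥ Y *ᵥ (fun i => Δ i j) := by
    unfold Matrix.trace Matrix.diag
    refine Finset.sum_congr rfl fun j _ => ?_
    simp only [Matrix.mul_apply, Matrix.transpose_apply, Matrix.mulVec, dotProduct]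
  have tb : Matrix.trace (Δ * Y' * Δᵀ) = ∑ j, (Δ j) ⬝ᵥ Y' *ᵥ (Δ j) := by
    unfold Matrix.trace Matrix.diag
    refine Finset.sum_congr rfl fun j _ => ?_
    simp only [Matrix.mul_apply, Matrix.transpose_apply, Matrix.mulVec, dotProduct]
    simp only [Finset.sum_mul, Finset.mul_sum]
    rw [Finset.sum_comm]
    exact Finset.sum_congr rfl fun a _ => Finset.sum_congr rfl fun b _ => by ring
  rw [ta, tb, ← Finset.sum_add_distrib] at htr
  have hterm := (Finset.sum_eq_zero_iff_of_nonneg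
    (fun j _ => add_nonneg (posdef_dot_nonneg hY _) (posdef_dot_nonneg hY' _))).1 htr
  have hcol : ∀ j, (fun i => Δ i j) = (0 : Fin n → F) := by
    intro j
    by_contra hcj
    have h1 := hY.2 _ hcj
    have h2 := posdef_dot_nonneg hY' (Δ j)
    have h3 := hterm j (Finset.mem_univ j)
    linarith
  have hΔ0 : Δ = 0 := by
    ext i j
    exact congrFun (hcol j) i
  have := sub_eq_zero.1 (hΔ ▸ hΔ0)
  exact this

lemma exists_sqrt (hF : IsRealClosedFld F) {d : Fin n → F} (hd : ∀ i, 0 < d i) :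
    ∃ s : Fin n → F, (∀ i, 0 < s i) ∧ ∀ i, s i * s i = d i := by
  choose y hy using fun i => hF.1 (d i) (hd i).le
  refine ⟨fun i => |y i|, fun i => ?_, fun i => ?_⟩
  · have : y i ≠ 0 := by
      intro h0
      have := hy i
      rw [h0] at this
      simp at this
      exact (hd i).ne' this.symm
    exact abs_pos.2 this
  · have : |y i| * |y i| = y i ^ 2 := by rw [← abs_mul, ← sq, abs_sq]
    rw [this, hy i]

end Sqrt
/-- Over a real closed field, for `D = diag(d₁,…,dₙ)` with all `dᵢ > 0`,
the `F`-tubes `Y_{0,l_∞}` and `Y_{−Id,D}` meet in exactly one point of the Siegel upper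
half-space, namely `i√D` where `√D` is the positive square root of `D`. -/
theorem tubes_intersect_in_one_point (F : Type*) [Field F] [LinearOrder F] [IsStrictOrderedRing F]
    (hF : IsRealClosedFld F) (n : ℕ) (d : Fin n → F) (hd : ∀ i, 0 < d i) :
    (∃! p : Matrix (Fin n) (Fin n) F × Matrix (Fin n) (Fin n) F,
        InBothTubes (Matrix.diagonal d) p.1 p.2) ∧
      ∀ X Y : Matrix (Fin n) (Fin n) F, InBothTubes (Matrix.diagonal d) X Y →
        X = 0 ∧ Y * Y = Matrix.diagonal d := by
  rcases Nat.eq_zero_or_pos n with hn | hn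
  · subst hn
    have hsub : ∀ (α : Type _) (A B : Matrix (Fin 0) (Fin 0) α), A = B := by
      intro α A B; ext i j; exact i.elim0
    have hfun : ∀ v : Fin 0 → F, v = 0 := fun v => funext fun i => i.elim0
    have hboth : ∀ X Y : Matrix (Fin 0) (Fin 0) F, InBothTubes (Matrix.diagonal d) X Y := by
      intro X Y
      unfold InBothTubes
      exact ⟨hsub F _ _, ⟨hsub F _ _, fun v hv => absurd (hfun v) hv⟩,
        hsub (Kc F) _ _, hsub (Kc F) _ _⟩
    constructor
    · exact ⟨(0, 0), hboth 0 0, fun q _ => Prod.ext (hsub F _ _) (hsub F _ _)⟩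
    · exact fun X Y _ => ⟨hsub F _ _, hsub F _ _⟩
  · obtain ⟨s, hs, hss⟩ := exists_sqrt hF hd
    have hYpos : IsPosDefM (Matrix.diagonal s) :=
      ⟨Matrix.diagonal_transpose s, posdef_diagonal hs⟩
    have hsq : Matrix.diagonal s * Matrix.diagonal s = Matrix.diagonal d := by
      rw [Matrix.diagonal_mul_diagonal]
      exact congrArg Matrix.diagonal (funext fun i => hss i)
    constructor
    · refine ⟨(0, Matrix.diagonal s), backward_core hd hYpos hsq, ?_⟩
      rintro ⟨X, Y⟩ hq
      obtain ⟨hX0, hYY⟩ := forward_core hn hd hq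
      have hYpd : IsPosDefM Y := by
        unfold InBothTubes at hq
        exact hq.2.1
      have hYs : Y = Matrix.diagonal s := sqrt_unique hYpd hYpos (hYY.trans hsq.symm)
      exact Prod.ext hX0 hYs
    · intro X Y h
      exact forward_core hn hd h
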